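/- Fix a ∈ (-1,1) and set c = (a-1)/2. Define u : [-1,1] → ℝ by u(x) = c(x+1) for -1 ≤ x < a and u(x) = c(a+1) + (1+c)(x-a) for a ≤ x ≤ 1, and set a_k = (1/2)(P_{k-1}(a) - P_{k+1}(a)) for k ≥ 1. Then the Legendre coefficients of u satisfy c_0(u) = -a_1/3 and c_k(u) = a_{k-1}/(2k-1) - a_{k+1}/(2k+3) for every integer k ≥ 1 (with the convention a_0 = 0). -/

import Mathlib

open MeasureTheory Real Polynomial Finset

/-- The `n`-th Legendre polynomial (via Rodrigues' formula), normalized so that `P n 1 = 1`. -/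
noncomputable def legendre (n : ℕ) : Polynomial ℝ :=
  ((2 ^ n * n.factorial : ℝ)⁻¹) • derivative^[n] ((X ^ 2 - 1) ^ n)

/-- The `k`-th Legendre coefficient of `f : [-1,1] → ℝ`:  `c_k(f) = (k + 1/2) ∫_{-1}^1 f t P_k t dt`. -/
noncomputable def legendreCoeff (f : ℝ → ℝ) (k : ℕ) : ℝ :=
  ((k : ℝ) + 1 / 2) * ∫ t in (-1 : ℝ)..1, f t * (legendre k).eval t

/-- The `p`-th partial Legendre sum of `f`:  `S_p(f)(x) = ∑_{k=0}^p c_k(f) P_k(x)`. -/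
noncomputable def legendreSum (f : ℝ → ℝ) (p : ℕ) (x : ℝ) : ℝ :=
  ∑ k ∈ Finset.range (p + 1), legendreCoeff f k * (legendre k).eval x

/-! ### Auxiliary polynomial lemmas -/

noncomputable def Wp (n : ℕ) : Polynomial ℝ := ((X : Polynomial ℝ) ^ 2 - 1) ^ n

lemma derivX2 : derivative ((X:Polynomial ℝ)^2 - 1) = (2:ℝ) • X := by
  rw [derivative_sub, derivative_one, derivative_X_pow]
  norm_num
  rw [Polynomial.smul_eq_C_mul]

lemma iterD_add (m : ℕ) (f g : Polynomial ℝ) :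
    derivative^[m] (f + g) = derivative^[m] f + derivative^[m] g := by
  induction m generalizing f g with
  | zero => simp
  | succ m ih => rw [Function.iterate_succ_apply, derivative_add, ih,
      ← Function.iterate_succ_apply, ← Function.iterate_succ_apply]

lemma iterD_X_mul (m : ℕ) (f : Polynomial ℝ) :
    derivative^[m+1] (X * f) = X * derivative^[m+1] f + ((m : ℝ) + 1) • derivative^[m] f := by
  induction m generalizing f with
  | zero => simp [derivative_mul]; ring
  | succ m ih =>
      rw [Function.iterate_succ_apply, derivative_mul, derivative_X, one_mul,
        iterD_add, ih (derivative f)]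
      rw [show derivative^[m+1] (derivative f) = derivative^[m+2] f from
        (Function.iterate_succ_apply derivative (m+1) f).symm,
        show derivative^[m+1] f = derivative^[m] (derivative f) from
        Function.iterate_succ_apply derivative m f]
      push_cast
      match_scalars <;> ring

lemma iterD_X2_mul (m : ℕ) (f : Polynomial ℝ) :
    derivative^[m+2] ((X ^ 2 - 1) * f) =
      (X ^ 2 - 1) * derivative^[m+2] f + (2 * ((m : ℝ) + 2)) • (X * derivative^[m+1] f)
        + (((m : ℝ) + 2) * ((m : ℝ) + 1)) • derivative^[m] f := by
  induction m generalizing f with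
  | zero =>
      simp only [Function.iterate_succ_apply', Function.iterate_zero_apply]
      simp only [derivative_mul, derivative_add, derivX2, derivative_smul, smul_mul_assoc,
        derivative_X, one_mul]
      match_scalars <;> norm_num
  | succ m ih =>
      rw [Function.iterate_succ_apply derivative (m+2) ((X^2-1)*f),
        derivative_mul, derivX2, smul_mul_assoc, iterD_add,
        Polynomial.iterate_derivative_smul, iterD_X_mul (m+1) f, ih (derivative f),
        ← Function.iterate_succ_apply derivative (m+2) f,
        ← Function.iterate_succ_apply derivative (m+1) f,
        ← Function.iterate_succ_apply derivative m f]
      push_cast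
      match_scalars <;> ring

lemma W_succ (n : ℕ) : Wp (n+1) = (X^2 - 1) * Wp n := by rw [Wp, Wp, pow_succ, mul_comm]

lemma W_deriv (n : ℕ) : derivative (Wp (n+1)) = (2*((n:ℝ)+1)) • (X * Wp n) := by
  rw [Wp, derivative_pow, derivX2, Nat.add_sub_cancel,
    show ((X:Polynomial ℝ)^2-1)^n = Wp n from rfl,
    Polynomial.smul_eq_C_mul, Polynomial.smul_eq_C_mul]
  push_cast [map_add, map_mul, map_one, map_ofNat, map_natCast]
  ring

lemma keyK (n : ℕ) : (X^2-1) * derivative^[n+2] (Wp (n+1))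
    = (((n:ℝ)+1)*((n:ℝ)+2)) • derivative^[n] (Wp (n+1)) := by
  induction n with
  | zero =>
      show (X^2-1) * derivative (derivative (Wp 1)) = _
      rw [show Wp 1 = (X^2-1) from by rw [Wp, pow_one], derivX2, derivative_smul, derivative_X]
      simp only [Function.iterate_zero_apply, Polynomial.smul_eq_C_mul, map_mul, map_add,
        map_one, map_ofNat, map_natCast]
      push_cast
      ring
  | succ m _ =>
      have rel : (X^2-1) * derivative (Wp (m+2)) = (2*((m:ℝ)+2)) • (X * Wp (m+2)) := by
        rw [show m+2 = (m+1)+1 from rfl, W_deriv (m+1), W_succ (m+1)]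
        simp only [Polynomial.smul_eq_C_mul, map_mul, map_add, map_one, map_ofNat, map_natCast]
        push_cast
        ring
      have E := congrArg (derivative^[m+2]) rel
      rw [iterD_X2_mul m (derivative (Wp (m+2))), Polynomial.iterate_derivative_smul,
        iterD_X_mul (m+1) (Wp (m+2)),
        ← Function.iterate_succ_apply derivative (m+2) (Wp (m+2)),
        ← Function.iterate_succ_apply derivative (m+1) (Wp (m+2)),
        ← Function.iterate_succ_apply derivative m (Wp (m+2))] at E
      simp only [Nat.succ_eq_add_one, Polynomial.smul_eq_C_mul, map_mul, map_add,
        map_one, map_ofNat, map_natCast] at E ⊢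
      push_cast at E ⊢
      linear_combination E

lemma legendre_eq (n : ℕ) :
    legendre n = ((2 ^ n * n.factorial : ℝ)⁻¹) • derivative^[n] (Wp n) := rfl

lemma legendre_deriv (n : ℕ) :
    derivative (legendre n) = ((2 ^ n * n.factorial : ℝ)⁻¹) • derivative^[n+1] (Wp n) := by
  rw [legendre_eq, derivative_smul,
    show derivative (derivative^[n] (Wp n)) = derivative^[n+1] (Wp n) from
      (Function.iterate_succ_apply' derivative n (Wp n)).symm]

lemma hfac (n : ℕ) : ((2:ℝ) ^ (n+1) * (n+1).factorial)⁻¹ * (2*((n:ℝ)+1))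
    = ((2:ℝ) ^ n * n.factorial)⁻¹ := by
  have h1 : (n.factorial : ℝ) ≠ 0 := Nat.cast_ne_zero.mpr n.factorial_ne_zero
  rw [Nat.factorial_succ]
  push_cast
  rw [pow_succ]
  field_simp

lemma idA (n : ℕ) : derivative (legendre (n+1))
    = X * derivative (legendre n) + ((n:ℝ)+1) • legendre n := by
  rw [legendre_deriv (n+1), legendre_deriv n, legendre_eq n,
    show derivative^[n+2] (Wp (n+1)) = derivative^[n+1] (derivative (Wp (n+1))) from
      Function.iterate_succ_apply derivative (n+1) (Wp (n+1)),
    W_deriv n, Polynomial.iterate_derivative_smul, iterD_X_mul n (Wp n),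
    smul_smul, hfac n]
  simp only [Polynomial.smul_eq_C_mul, map_mul, map_add, map_one, map_ofNat, map_natCast]
  ring

lemma legendre_zero : legendre 0 = 1 := by
  simp [legendre]

lemma legendre_one : legendre 1 = X := by
  have h : derivative (((X:Polynomial ℝ)^2-1)^1) = C 2 * X := by
    rw [pow_one, derivative_sub, derivative_one, derivative_X_pow]
    norm_num
  simp only [legendre, Function.iterate_one, h]
  rw [Polynomial.smul_eq_C_mul]
  rw [← mul_assoc, ← map_mul]
  norm_num

lemma idB (n : ℕ) : (X^2-1) * derivative (legendre n) + ((n:ℝ)+1) • (X * legendre n)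
    = ((n:ℝ)+1) • legendre (n+1) := by
  cases n with
  | zero =>
      rw [legendre_zero, legendre_one]
      simp
  | succ m =>
      have hf : (((m+2).factorial : ℕ) : ℝ) = ((m:ℝ)+2) * ((m+1).factorial : ℕ) := by
        rw [show m+2 = (m+1)+1 from rfl, Nat.factorial_succ]; push_cast; ring
      have hf1 : (((m+1).factorial : ℕ) : ℝ) ≠ 0 := Nat.cast_ne_zero.mpr (Nat.factorial_ne_zero _)
      rw [legendre_deriv (m+1), legendre_eq (m+1), legendre_eq (m+2),
        show derivative^[m+2] (Wp (m+2)) = derivative^[m+1] (derivative (Wp (m+2))) from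
          Function.iterate_succ_apply derivative (m+1) (Wp (m+2)),
        W_deriv (m+1), Polynomial.iterate_derivative_smul, iterD_X_mul m (Wp (m+1)),
        mul_smul_comm, mul_smul_comm, keyK m]
      match_scalars
      · push_cast [hf]
        have hp : (2:ℝ)^(m+2) = 2^(m+1) * 2 := by ring
        rw [hp]
        field_simp
        ring
      · push_cast [hf]
        have hp : (2:ℝ)^(m+2) = 2^(m+1) * 2 := by ring
        rw [hp]
        field_simp
        ring

lemma legendre_diff (n : ℕ) : derivative (legendre (n+2))
    = derivative (legendre n) + (2*(n:ℝ)+3) • legendre (n+1) := by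
  have A1 := idA (n+1)
  have A0 := idA n
  have B := idB n
  have XA0 := congrArg (fun p => X * p) A0
  simp only [Polynomial.smul_eq_C_mul, map_mul, map_add, map_one, map_ofNat, map_natCast,
    Nat.cast_add, Nat.cast_one] at A1 A0 B XA0 ⊢
  linear_combination A1 + X * A0 + B

lemma legendre_eval_one (n : ℕ) : (legendre n).eval 1 = 1 := by
  induction n with
  | zero => rw [legendre_zero]; simp
  | succ m ih =>
      have := congrArg (eval 1) (idB m)
      simp only [eval_add, eval_mul, eval_smul, eval_sub, eval_pow, eval_X, eval_one,
        smul_eq_mul] at this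
      norm_num at this
      have hm : ((m:ℝ)+1) ≠ 0 := by positivity
      rw [ih] at this
      rcases this with h | h
      · linarith
      · exact absurd h hm

lemma legendre_eval_negone (n : ℕ) : (legendre n).eval (-1) = (-1)^n := by
  induction n with
  | zero => rw [legendre_zero]; simp
  | succ m ih =>
      have := congrArg (eval (-1)) (idB m)
      simp only [eval_add, eval_mul, eval_smul, eval_sub, eval_pow, eval_X, eval_one,
        smul_eq_mul] at this
      norm_num at this
      have hm : ((m:ℝ)+1) ≠ 0 := by positivity
      rw [ih] at this
      have h2 : ((m:ℝ)+1) * ((-1) * (-1)^m) = ((m:ℝ)+1) * eval (-1) (legendre (m+1)) := by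
        linarith [this]
      have h3 := mul_left_cancel₀ hm h2
      rw [← h3]
      ring

/-! ### Integration lemmas -/

noncomputable def Qp (n : ℕ) : Polynomial ℝ := (2*(n:ℝ)+3)⁻¹ • (legendre (n+2) - legendre n)

lemma Qp_deriv (n : ℕ) : derivative (Qp n) = legendre (n+1) := by
  rw [Qp, derivative_smul, derivative_sub, legendre_diff n, add_sub_cancel_left, smul_smul,
    inv_mul_cancel₀ (by positivity : (2*(n:ℝ)+3) ≠ 0), one_smul]

lemma Qp_eval_one (n : ℕ) : eval 1 (Qp n) = 0 := by
  simp [Qp, legendre_eval_one]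

lemma Qp_eval_negone (n : ℕ) : eval (-1) (Qp n) = 0 := by
  have : ((-1:ℝ))^(n+2) = (-1)^n := by rw [pow_add]; norm_num
  simp [Qp, legendre_eval_negone, this]

lemma integral_deriv_poly (p : Polynomial ℝ) (x y : ℝ) :
    ∫ t in x..y, (derivative p).eval t = p.eval y - p.eval x := by
  apply intervalIntegral.integral_eq_sub_of_hasDerivAt
  · intro t _
    simpa using p.hasDerivAt t
  · exact ((derivative p).continuous.intervalIntegrable _ _)

lemma integral_legendre (n : ℕ) (x y : ℝ) :
    ∫ t in x..y, (legendre (n+1)).eval t = (Qp n).eval y - (Qp n).eval x := by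
  rw [← Qp_deriv n]
  exact integral_deriv_poly _ _ _

lemma intP (n : ℕ) (x : ℝ) : ∫ t in x..(1:ℝ), (legendre (n+1)).eval t
    = (2*(n:ℝ)+3)⁻¹ * ((legendre n).eval x - (legendre (n+2)).eval x) := by
  rw [integral_legendre, Qp_eval_one]
  simp [Qp]
  ring

lemma int_legendre_full (n : ℕ) : ∫ t in (-1:ℝ)..1, (legendre (n+1)).eval t = 0 := by
  rw [integral_legendre, Qp_eval_one, Qp_eval_negone]
  ring

lemma ramp (n : ℕ) (b : ℝ) : ∫ t in b..(1:ℝ), (t - b) * (legendre (n+1)).eval t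
    = - ∫ t in b..(1:ℝ), (Qp n).eval t := by
  have key : ∀ t : ℝ, (t - b) * (legendre (n+1)).eval t
      = (derivative ((X - C b) * Qp n)).eval t - (Qp n).eval t := by
    intro t
    rw [derivative_mul, Qp_deriv]
    simp
  rw [intervalIntegral.integral_congr
    (g := fun t => (derivative ((X - C b) * Qp n)).eval t - (Qp n).eval t) (fun t _ => key t)]
  rw [intervalIntegral.integral_sub ((derivative ((X - C b) * Qp n)).continuous.intervalIntegrable _ _)
    ((Qp n).continuous.intervalIntegrable _ _)]
  rw [integral_deriv_poly]
  simp [Qp_eval_one]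

lemma intQ (n : ℕ) (x : ℝ) : ∫ t in x..(1:ℝ), (Qp n).eval t
    = (2*(n:ℝ)+3)⁻¹ * ((∫ t in x..(1:ℝ), (legendre (n+2)).eval t)
        - ∫ t in x..(1:ℝ), (legendre n).eval t) := by
  have key : ∀ t : ℝ, (Qp n).eval t
      = (2*(n:ℝ)+3)⁻¹ * ((legendre (n+2)).eval t - (legendre n).eval t) := by
    intro t; simp [Qp]
  rw [intervalIntegral.integral_congr
    (g := fun t => (2*(n:ℝ)+3)⁻¹ * ((legendre (n+2)).eval t - (legendre n).eval t))
    (fun t _ => key t)]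
  rw [intervalIntegral.integral_const_mul,
    intervalIntegral.integral_sub ((legendre (n+2)).continuous.intervalIntegrable _ _)
      ((legendre n).continuous.intervalIntegrable _ _)]

lemma integral_of_deriv (f : ℝ → ℝ) (p : Polynomial ℝ) (h : ∀ t, f t = (derivative p).eval t)
    (x y : ℝ) : ∫ t in x..y, f t = p.eval y - p.eval x := by
  rw [intervalIntegral.integral_congr (g := fun t => (derivative p).eval t) (fun t _ => h t),
    integral_deriv_poly]

lemma legendre_two_eval (x : ℝ) : (legendre 2).eval x = (3*x^2-1)/2 := by
  have e : (((X:Polynomial ℝ)^2-1)^2) = X^4 - C 2 * X^2 + 1 := by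
    push_cast [map_ofNat]
    ring
  have d1 : derivative (((X:Polynomial ℝ)^2-1)^2) = C 4 * X^3 - C 4 * X := by
    rw [e]
    simp [derivative_X_pow]
    push_cast [map_ofNat]
    ring
  have d2 : derivative^[2] (((X:Polynomial ℝ)^2-1)^2) = C 12 * X^2 - C 4 := by
    show derivative (derivative _) = _
    rw [d1]
    simp [derivative_X_pow]
    push_cast [map_ofNat]
    ring
  rw [legendre]
  rw [d2]
  simp
  norm_num
  ring

/-- the Legendre coefficients of the piecewise linear solution `u`. -/
theorem stmt_9 (a : ℝ) (ha : a ∈ Set.Ioo (-1 : ℝ) 1) (c : ℝ) (hc : c = (a - 1) / 2)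
    (u : ℝ → ℝ)
    (hu₁ : ∀ x : ℝ, -1 ≤ x → x < a → u x = c * (x + 1))
    (hu₂ : ∀ x : ℝ, a ≤ x → x ≤ 1 → u x = c * (a + 1) + (1 + c) * (x - a))
    (A : ℕ → ℝ) (hA₀ : A 0 = 0)
    (hA : ∀ k : ℕ, 1 ≤ k → A k = (1 / 2) * ((legendre (k - 1)).eval a - (legendre (k + 1)).eval a)) :
    legendreCoeff u 0 = -(A 1) / 3 ∧
      ∀ k : ℕ, 1 ≤ k →
        legendreCoeff u k = A (k - 1) / (2 * (k : ℝ) - 1) - A (k + 1) / (2 * (k : ℝ) + 3) := by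
  obtain ⟨ha1, ha2⟩ := ha
  have hcont : ∀ p : Polynomial ℝ, Continuous fun t : ℝ => (c*(t+1)) * p.eval t :=
    fun p => (continuous_const.mul (continuous_id.add continuous_const)).mul p.continuous
  have hcont2 : ∀ p : Polynomial ℝ, Continuous fun t : ℝ => (t - a) * p.eval t :=
    fun p => (continuous_id.sub continuous_const).mul p.continuous
  have hsplit : ∀ p : Polynomial ℝ, (∫ t in (-1:ℝ)..1, u t * p.eval t)
      = (∫ t in (-1:ℝ)..1, (c*(t+1)) * p.eval t) + ∫ t in a..(1:ℝ), (t - a) * p.eval t := by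
    intro p
    have e1 : Set.EqOn (fun t => u t * p.eval t) (fun t => (c*(t+1)) * p.eval t)
        (Set.uIcc (-1:ℝ) a) := by
      intro t ht
      rw [Set.uIcc_of_le (by linarith : (-1:ℝ) ≤ a)] at ht
      rcases lt_or_ge t a with h | h
      · simp only
        rw [hu₁ t ht.1 h]
      · have hta : t = a := le_antisymm ht.2 h
        subst hta
        simp only
        rw [hu₂ t le_rfl (by linarith)]
        ring_nf
    have e2 : Set.EqOn (fun t => u t * p.eval t) (fun t => ((c*(t+1)) + (t - a)) * p.eval t)
        (Set.uIcc a (1:ℝ)) := by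
      intro t ht
      rw [Set.uIcc_of_le (by linarith : a ≤ (1:ℝ))] at ht
      simp only
      rw [hu₂ t ht.1 ht.2]
      ring
    have i1 : IntervalIntegrable (fun t => u t * p.eval t) volume (-1) a := by
      rw [intervalIntegrable_iff]
      have h0 : IntervalIntegrable _ volume (-1) a := (hcont p).intervalIntegrable (-1) a
      rw [intervalIntegrable_iff] at h0
      exact h0.congr_fun (fun t ht => (e1 (Set.uIoc_subset_uIcc ht)).symm) measurableSet_uIoc
    have i2 : IntervalIntegrable (fun t => u t * p.eval t) volume a 1 := by
      rw [intervalIntegrable_iff]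
      have h0 : IntervalIntegrable (fun t : ℝ => ((c*(t+1)) * p.eval t) + (t-a) * p.eval t)
          volume a 1 := ((hcont p).add (hcont2 p)).intervalIntegrable a 1
      rw [intervalIntegrable_iff] at h0
      refine h0.congr_fun (g := fun t => u t * p.eval t) (fun t ht => ?_) measurableSet_uIoc
      have h2 := e2 (Set.uIoc_subset_uIcc ht)
      simp only at h2 ⊢
      rw [h2]
      ring
    have add1 := intervalIntegral.integral_add_adjacent_intervals i1 i2
    rw [← add1, intervalIntegral.integral_congr e1, intervalIntegral.integral_congr e2]
    have spl : ∫ t in a..(1:ℝ), ((c*(t+1)) + (t-a)) * p.eval t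
        = (∫ t in a..(1:ℝ), (c*(t+1)) * p.eval t) + ∫ t in a..(1:ℝ), (t-a) * p.eval t := by
      rw [← intervalIntegral.integral_add ((hcont p).intervalIntegrable (μ := volume) _ _)
        ((hcont2 p).intervalIntegrable (μ := volume) _ _)]
      apply intervalIntegral.integral_congr
      intro t _
      simp only
      ring
    have add2 := intervalIntegral.integral_add_adjacent_intervals
      ((hcont p).intervalIntegrable (μ := volume) (-1) a)
      ((hcont p).intervalIntegrable (μ := volume) a 1)
    rw [spl, ← add2]
    ring
  have hLin : ∀ m : ℕ, (∫ t in (-1:ℝ)..1, (c*(t+1)) * (legendre (m+2)).eval t) = 0 := by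
    intro m
    rw [show (fun t : ℝ => (c*(t+1)) * (legendre (m+2)).eval t)
        = (fun t : ℝ => c * ((t - (-1)) * (legendre (m+2)).eval t)) from
      funext (fun t => by ring)]
    rw [intervalIntegral.integral_const_mul, ramp (m+1) (-1), intQ (m+1) (-1)]
    rw [show ((m+1)+2) = (m+2)+1 from rfl, int_legendre_full (m+2), int_legendre_full m]
    ring
  constructor
  · -- k = 0
    have L0 : (∫ t in (-1:ℝ)..1, (c*(t+1)) * (legendre 0).eval t) = 2*c := by
      rw [integral_of_deriv _ (C c * (C 2⁻¹ * X^2 + X))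
        (fun t => by rw [legendre_zero]; simp [derivative_X_pow] <;> ring_nf <;> simp)]
      simp <;> ring
    have R0 : ∫ t in a..(1:ℝ), (t-a) * (legendre 0).eval t = (1-a)^2/2 := by
      rw [integral_of_deriv _ (C 2⁻¹ * (X - C a)^2)
        (fun t => by rw [legendre_zero]; simp [derivative_pow] <;> ring)]
      simp <;> ring
    rw [legendreCoeff, hsplit (legendre 0), L0, R0, hA 1 le_rfl]
    rw [show (1:ℕ)-1 = 0 from rfl, legendre_zero, legendre_two_eval]
    subst hc
    simp
    ring
  · intro k hk
    obtain ⟨j, rfl⟩ : ∃ j, k = j + 1 := ⟨k-1, (Nat.succ_pred_eq_of_pos hk).symm⟩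
    cases j with
    | zero =>
        -- k = 1
        have L1 : (∫ t in (-1:ℝ)..1, (c*(t+1)) * (legendre 1).eval t) = 2*c/3 := by
          rw [integral_of_deriv _ (C c * (C 3⁻¹ * X^3 + C 2⁻¹ * X^2))
            (fun t => by rw [legendre_one]; simp [derivative_X_pow] <;> ring)]
          simp <;> ring
        have i2 : ∫ t in a..(1:ℝ), (legendre 2).eval t
            = (1/5) * ((legendre 1).eval a - (legendre 3).eval a) := by
          have h := intP 1 a
          norm_num at h
          exact h
        have i0 : ∫ t in a..(1:ℝ), (legendre 0).eval t = 1 - a := by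
          rw [legendre_zero]
          simp
        have R1 : ∫ t in a..(1:ℝ), (t-a) * (legendre 1).eval t
            = -((1/3) * (((1/5) * ((legendre 1).eval a - (legendre 3).eval a)) - (1-a))) := by
          have h := ramp 0 a
          rw [intQ 0 a] at h
          norm_num at h ⊢
          rw [h, i2, i0]
        rw [legendreCoeff, hsplit (legendre 1), L1, R1, hA₀]
        rw [hA 2 (by omega), show (2:ℕ)-1 = 1 from rfl, show (2:ℕ)+1 = 3 from rfl]
        subst hc
        norm_num
        ring
    | succ m =>
        -- k = m + 2
        have i3 : ∫ t in a..(1:ℝ), (legendre (m+3)).eval t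
            = (2*((m:ℝ)+2)+3)⁻¹ * ((legendre (m+2)).eval a - (legendre (m+4)).eval a) := by
          have h := intP (m+2) a
          push_cast at h ⊢
          convert h using 2 <;> push_cast <;> ring
        have i1 : ∫ t in a..(1:ℝ), (legendre (m+1)).eval t
            = (2*(m:ℝ)+3)⁻¹ * ((legendre m).eval a - (legendre (m+2)).eval a) := intP m a
        have hr : ∫ t in a..(1:ℝ), (t-a) * (legendre (m+2)).eval t
            = -((2*((m:ℝ)+1)+3)⁻¹ *
                ((2*((m:ℝ)+2)+3)⁻¹ * ((legendre (m+2)).eval a - (legendre (m+4)).eval a)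
                  - (2*(m:ℝ)+3)⁻¹ * ((legendre m).eval a - (legendre (m+2)).eval a))) := by
          have h := ramp (m+1) a
          rw [intQ (m+1) a] at h
          rw [show ((m+1)+2) = m+3 from rfl, show ((m+1)+1) = m+2 from rfl] at h
          rw [h, i3, i1]
          push_cast
          ring
        rw [legendreCoeff, hsplit (legendre (m+1+1)),
          show m+1+1 = m+2 from rfl, hLin m, hr]
        rw [hA (m+1+1-1) (by omega), hA (m+1+1+1) (by omega)]
        rw [show m+1+1-1 = m+1 from rfl, show (m+1)-1 = m from rfl,
          show (m+1)+1 = m+2 from rfl, show m+1+1+1 = m+3 from rfl,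
          show (m+3)-1 = m+2 from rfl, show (m+3)+1 = m+4 from rfl]
        have d1 : (2*((m:ℝ)+1)+3) ≠ 0 := by positivity
        have d2 : (2*((m:ℝ)+2)+3) ≠ 0 := by positivity
        have d3 : (2*(m:ℝ)+3) ≠ 0 := by positivity
        have hm0 : (0:ℝ) ≤ (m:ℝ) := Nat.cast_nonneg m
        have d4 : (2*((m:ℝ)+2)-1) ≠ 0 := by nlinarith
        push_cast
        field_simp
        ring
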